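/- Partial-ISS Lyapunov characterization (sufficiency): Consider the system x₁(k+1)=g₁(x₁(k),x₂(k),u(k)), x₂(k+1)=g₂(x₁(k),x₂(k),u(k)) with continuous g = (g₁,g₂) globally K-bounded with respect to ω(x₁,x₂) := |x₁|. If there exist a continuous V : ℝ^{n₁} × ℝ^{n₂} → ℝ≥0, an integer M > 0, α̲, ᾱ ∈ K∞, γ ∈ K, and α ∈ K∞ with α < id such that α̲(|ξ₁|) ≤ V(ξ₁,ξ₂) ≤ ᾱ(|ξ₁|) and V(x₁(M,ξ,u), x₂(M,ξ,u)) ≤ max{α(V(ξ₁,ξ₂)), γ(‖u‖)} for all ξ = (ξ₁,ξ₂) and bounded u, then the system is uniformly input-to-x₁-state stable: there exist β ∈ KL and γ' ∈ K with |x₁(k,ξ,u)| ≤ max{β(|ξ₁|,k), γ'(‖u‖)} for all k, ξ, u. -/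

import Mathlib

open Filter Topology

/-- Class-K function: continuous, strictly increasing on [0,∞), zero at zero. -/
def ClassK (α : ℝ → ℝ) : Prop :=
  ContinuousOn α (Set.Ici 0) ∧ StrictMonoOn α (Set.Ici 0) ∧ α 0 = 0

/-- Class-K∞ function. -/
def ClassKInf (α : ℝ → ℝ) : Prop :=
  ClassK α ∧ Filter.Tendsto α Filter.atTop Filter.atTop

/-- Class-KL function. -/
def ClassKL (β : ℝ → ℝ → ℝ) : Prop :=
  ContinuousOn (fun p : ℝ × ℝ => β p.1 p.2) (Set.Ici 0 ×ˢ Set.Ici 0) ∧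
  (∀ s, 0 ≤ s → ClassK (fun r => β r s)) ∧
  (∀ r, 0 ≤ r → AntitoneOn (fun s => β r s) (Set.Ici 0) ∧
    Filter.Tendsto (fun s => β r s) Filter.atTop (nhds 0))

/-- Measurement function: continuous and positive semidefinite. -/
def MeasurementFn {E : Type*} [TopologicalSpace E] (ω : E → ℝ) : Prop :=
  Continuous ω ∧ ∀ x, 0 ≤ ω x

/-- Sup-norm of an input sequence. -/
noncomputable def supNorm {U : Type*} [Norm U] (u : ℕ → U) : ℝ := ⨆ k, ‖u k‖

/-- A bounded input sequence. -/
def BddInput {U : Type*} [Norm U] (u : ℕ → U) : Prop := ∃ C, ∀ k, ‖u k‖ ≤ C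

/-- Solution of x(k+1) = g(x(k), u(k)) from initial state ξ. -/
def sol {E U : Type*} (g : E → U → E) (ξ : E) (u : ℕ → U) : ℕ → E
  | 0 => ξ
  | k + 1 => g (sol g ξ u k) (u k)

/-- Composition of gains along a path i(0), i(1), ..., i(k):
`γ (i 0) (i 1) ∘ γ (i 1) (i 2) ∘ ⋯ ∘ γ (i (k-1)) (i k)`. -/
def compAlong {ℓ : ℕ} (γ : Fin ℓ → Fin ℓ → ℝ → ℝ) (i : ℕ → Fin ℓ) : ℕ → ℝ → ℝ
  | 0 => id
  | k + 1 => (compAlong γ i k) ∘ γ (i k) (i (k + 1))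

/-- Cyclic small-gain condition: all gain compositions along cycles of
length at most ℓ are strictly below the identity. -/
def SmallGainCond {ℓ : ℕ} (γ : Fin ℓ → Fin ℓ → ℝ → ℝ) : Prop :=
  ∀ r : ℕ, 1 ≤ r → r ≤ ℓ → ∀ i : ℕ → Fin ℓ, i r = i 0 →
    ∀ s : ℝ, 0 < s → compAlong γ i r s < s

/-- A monotonic norm on ℝ^ℓ. -/
def MonotoneNorm {ℓ : ℕ} (μ : (Fin ℓ → ℝ) → ℝ) : Prop :=
  (∀ z, 0 ≤ μ z) ∧ (∀ z, μ z = 0 ↔ z = 0) ∧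
  (∀ (c : ℝ) z, μ (c • z) = |c| * μ z) ∧
  (∀ z w, μ (z + w) ≤ μ z + μ w) ∧
  (∀ z w : Fin ℓ → ℝ, (∀ i, 0 ≤ z i) → (∀ i, z i ≤ w i) → μ z ≤ μ w)

/-!  Auxiliary development. -/
namespace PISS

/-- Globally nice strictly increasing function vanishing at 0. -/
def K0 (f : ℝ → ℝ) : Prop := Continuous f ∧ StrictMono f ∧ f 0 = 0

/-- Weak class: continuous monotone vanishing at 0. -/
def Kw (f : ℝ → ℝ) : Prop := Continuous f ∧ Monotone f ∧ f 0 = 0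

lemma K0.kw {f : ℝ → ℝ} (h : K0 f) : Kw f := ⟨h.1, h.2.1.monotone, h.2.2⟩

lemma Kw.nonneg {f : ℝ → ℝ} (h : Kw f) {s : ℝ} (hs : 0 ≤ s) : 0 ≤ f s :=
  h.2.2 ▸ h.2.1 hs

lemma K0.nonneg {f : ℝ → ℝ} (h : K0 f) {s : ℝ} (hs : 0 ≤ s) : 0 ≤ f s := h.kw.nonneg hs

lemma K0.classK {f : ℝ → ℝ} (h : K0 f) : ClassK f :=
  ⟨h.1.continuousOn, h.2.1.strictMonoOn _, h.2.2⟩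

lemma K0.comp {f g : ℝ → ℝ} (hf : K0 f) (hg : K0 g) : K0 (f ∘ g) :=
  ⟨hf.1.comp hg.1, hf.2.1.comp hg.2.1, by simp [hg.2.2, hf.2.2]⟩

lemma K0.id : K0 (fun s : ℝ => s) := ⟨continuous_id, strictMono_id, rfl⟩

/-- Extension of a class-K function to all of ℝ. -/
noncomputable def ext (f : ℝ → ℝ) : ℝ → ℝ := fun s => f (max s 0) + min s 0

lemma ext_eq {f : ℝ → ℝ} {s : ℝ} (hs : 0 ≤ s) : ext f s = f s := by
  simp [ext, max_eq_left hs, min_eq_right hs]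

lemma ext_K0 {f : ℝ → ℝ} (h : ClassK f) : K0 (ext f) := by
  obtain ⟨hc, hm, h0⟩ := h
  refine ⟨?_, ?_, by simp [ext, h0]⟩
  · exact (hc.comp_continuous (continuous_id.max continuous_const)
      (fun x => Set.mem_Ici.mpr (le_max_right _ _))).add (continuous_id.min continuous_const)
  · intro s t hst
    rcases le_or_gt t 0 with ht | ht
    · have hs : s < 0 := lt_of_lt_of_le hst ht
      simp only [ext, max_eq_right hs.le, max_eq_right ht, min_eq_left hs.le, min_eq_left ht]
      linarith
    · rcases le_or_gt s 0 with hs | hs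
      · have h1 : f (max s 0) + min s 0 ≤ f 0 := by
          simp [max_eq_right hs, min_eq_left hs]; linarith
        have h2 : f 0 < f (max t 0) + min t 0 := by
          simp [max_eq_left ht.le, min_eq_right ht.le]
          exact hm (le_refl (0:ℝ) : (0:ℝ) ∈ Set.Ici 0) ht.le ht
        exact lt_of_le_of_lt h1 h2
      · simp only [ext, max_eq_left hs.le, max_eq_left ht.le, min_eq_right hs.le,
          min_eq_right ht.le]
        have := hm hs.le ht.le hst
        linarith

lemma ext_atTop' {f : ℝ → ℝ} (h : ClassKInf f) :
    Tendsto (ext f) atTop atTop := by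
  apply h.2.congr'
  filter_upwards [eventually_ge_atTop (0:ℝ)] with s hs
  exact (ext_eq hs).symm

lemma ext_atBot (f : ℝ → ℝ) : Tendsto (ext f) atBot atBot := by
  have : ∀ᶠ s in atBot, ext f s = f 0 + s := by
    filter_upwards [eventually_le_atBot (0:ℝ)] with s hs
    simp [ext, max_eq_right hs, min_eq_left hs]
  exact (tendsto_atBot_add_const_left _ _ tendsto_id).congr'
    (by filter_upwards [this] with s hs using hs.symm)

lemma ext_surj {f : ℝ → ℝ} (h : ClassKInf f) :
    Function.Surjective (ext f) :=
  ((ext_K0 h.1).1).surjective (ext_atTop' h) (ext_atBot f)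


section Itp
/-- Piecewise-linear interpolation of the iterates of `h`. -/
noncomputable def itp (h : ℝ → ℝ) (ρ t : ℝ) : ℝ :=
  (1 - (t - ⌊t⌋₊)) * h^[⌊t⌋₊] ρ + (t - ⌊t⌋₊) * h^[⌊t⌋₊ + 1] ρ

variable {h : ℝ → ℝ}

/-- iterates at a nonneg point are nonneg -/
lemma iter_nonneg (hK : K0 h) {ρ : ℝ} (hρ : 0 ≤ ρ) (n : ℕ) : 0 ≤ h^[n] ρ := by
  induction n with
  | zero => simpa using hρ
  | succ n ih =>
    rw [Function.iterate_succ_apply']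
    exact hK.nonneg ih

lemma iter_anti (hK : K0 h) (hlt : ∀ s : ℝ, 0 ≤ s → h s ≤ s) {ρ : ℝ} (hρ : 0 ≤ ρ) : Antitone (fun n => h^[n] ρ) := by
  apply antitone_nat_of_succ_le
  intro n
  rw [Function.iterate_succ_apply']
  exact hlt _ (iter_nonneg hK hρ n)

lemma iter_zero (hK : K0 h) (n : ℕ) : h^[n] (0:ℝ) = 0 := Function.iterate_fixed hK.2.2 n

lemma fract_lt {t : ℝ} (ht : 0 ≤ t) : t - (⌊t⌋₊:ℝ) < 1 := by
  have := Nat.lt_floor_add_one t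
  linarith

lemma fract_nonneg' {t : ℝ} (ht : 0 ≤ t) : 0 ≤ t - (⌊t⌋₊:ℝ) := by
  have := Nat.floor_le ht
  linarith

/-- itp is sandwiched between consecutive iterates. -/
lemma itp_le (hK : K0 h) (hlt : ∀ s : ℝ, 0 ≤ s → h s ≤ s) {ρ t : ℝ} (hρ : 0 ≤ ρ) (ht : 0 ≤ t) : itp h ρ t ≤ h^[⌊t⌋₊] ρ := by
  have h1 := iter_anti hK hlt hρ (Nat.le_succ ⌊t⌋₊)
  have h2 := fract_nonneg' ht
  have h3 := (fract_lt ht).le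
  unfold itp
  nlinarith [iter_nonneg hK hρ ⌊t⌋₊]

lemma le_itp (hK : K0 h) (hlt : ∀ s : ℝ, 0 ≤ s → h s ≤ s) {ρ t : ℝ} (hρ : 0 ≤ ρ) (ht : 0 ≤ t) : h^[⌊t⌋₊ + 1] ρ ≤ itp h ρ t := by
  have h1 := iter_anti hK hlt hρ (Nat.le_succ ⌊t⌋₊)
  have h2 := fract_nonneg' ht
  have h3 := (fract_lt ht).le
  unfold itp
  nlinarith

/-- main lower bound: if t ≤ j then the j-th iterate is below itp. -/
lemma iter_le_itp (hK : K0 h) (hlt : ∀ s : ℝ, 0 ≤ s → h s ≤ s) {ρ t : ℝ} (hρ : 0 ≤ ρ) (ht : 0 ≤ t) {j : ℕ} (hj : t ≤ (j:ℝ)) :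
    h^[j] ρ ≤ itp h ρ t := by
  have hfl : ⌊t⌋₊ ≤ j := Nat.floor_le_of_le hj
  rcases eq_or_lt_of_le hfl with heq | hlt'
  · have : t = (j:ℝ) := le_antisymm hj (by rw[← heq]; exact Nat.floor_le ht)
    subst this
    simp [itp, Nat.floor_natCast]
  · calc h^[j] ρ ≤ h^[⌊t⌋₊ + 1] ρ := iter_anti hK hlt hρ hlt'
      _ ≤ itp h ρ t := le_itp hK hlt hρ ht

lemma itp_nonneg (hK : K0 h) (hlt : ∀ s : ℝ, 0 ≤ s → h s ≤ s) {ρ t : ℝ} (hρ : 0 ≤ ρ) (ht : 0 ≤ t) : 0 ≤ itp h ρ t := by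
  have := le_itp hK hlt hρ ht
  have := iter_nonneg hK hρ (⌊t⌋₊ + 1)
  linarith

lemma itp_zero (hK : K0 h) {t : ℝ} : itp h 0 t = 0 := by
  simp [itp, iter_zero hK]

/-- itp is strictly monotone in ρ. -/
lemma itp_strictMono (hK : K0 h) {t : ℝ} (ht : 0 ≤ t) : StrictMono (fun ρ => itp h ρ t) := by
  intro a b hab
  have h1 : h^[⌊t⌋₊] a < h^[⌊t⌋₊] b := (hK.2.1.iterate _) hab
  have h2 : h^[⌊t⌋₊+1] a ≤ h^[⌊t⌋₊+1] b := ((hK.2.1.iterate _) hab).le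
  have h3 := fract_nonneg' ht
  have h4 := fract_lt ht
  simp only [itp]
  have : (0:ℝ) < 1 - (t - ⌊t⌋₊) := by linarith
  nlinarith

/-- itp is antitone in t (for ρ ≥ 0). -/
lemma itp_anti (hK : K0 h) (hlt : ∀ s : ℝ, 0 ≤ s → h s ≤ s) {ρ : ℝ} (hρ : 0 ≤ ρ) {t₁ t₂ : ℝ} (h1 : 0 ≤ t₁) (h12 : t₁ ≤ t₂) :
    itp h ρ t₂ ≤ itp h ρ t₁ := by
  have h2 : (0:ℝ) ≤ t₂ := le_trans h1 h12
  have hfl : ⌊t₁⌋₊ ≤ ⌊t₂⌋₊ := Nat.floor_mono h12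
  rcases eq_or_lt_of_le hfl with heq | hlt'
  · have hA := iter_anti hK hlt hρ (Nat.le_succ ⌊t₁⌋₊)
    have hθ : t₁ - (⌊t₁⌋₊:ℝ) ≤ t₂ - (⌊t₂⌋₊:ℝ) := by rw [← heq]; linarith
    simp only [itp, ← heq]
    nlinarith
  · calc itp h ρ t₂ ≤ h^[⌊t₂⌋₊] ρ := itp_le hK hlt hρ h2
      _ ≤ h^[⌊t₁⌋₊ + 1] ρ := iter_anti hK hlt hρ hlt'
      _ ≤ itp h ρ t₁ := le_itp hK hlt hρ h1

/-- decay of iterates to 0. -/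
lemma iter_tendsto (hK : K0 h) (hlt : ∀ s : ℝ, 0 ≤ s → h s ≤ s) {ρ : ℝ} (hρ : 0 ≤ ρ) (hs : ∀ s : ℝ, 0 < s → h s < s) :
    Tendsto (fun n => h^[n] ρ) atTop (𝓝 0) := by
  have hb : BddBelow (Set.range fun n => h^[n] ρ) :=
    ⟨0, by rintro x ⟨n, rfl⟩; exact iter_nonneg hK hρ n⟩
  have htd := tendsto_atTop_ciInf (iter_anti hK hlt hρ) hb
  set L := ⨅ n, h^[n] ρ with hL
  have hL0 : 0 ≤ L := le_ciInf (fun n => iter_nonneg hK hρ n)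
  have hfix : h L = L := by
    have h1 : Tendsto (fun n => h^[n+1] ρ) atTop (𝓝 L) :=
      htd.comp (tendsto_add_atTop_nat 1)
    have h2 : Tendsto (fun n => h (h^[n] ρ)) atTop (𝓝 (h L)) :=
      (hK.1.tendsto L).comp htd
    have : (fun n => h^[n+1] ρ) = fun n => h (h^[n] ρ) := by
      funext n; rw [Function.iterate_succ_apply']
    rw [this] at h1
    exact tendsto_nhds_unique h2 h1
  rcases eq_or_lt_of_le hL0 with h0 | h0
  · rwa [← h0] at htd
  · exact absurd hfix (ne_of_lt (hs L h0))

/-- itp tends to 0 as t → ∞. -/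
lemma itp_tendsto (hK : K0 h) (hlt : ∀ s : ℝ, 0 ≤ s → h s ≤ s) {ρ : ℝ} (hρ : 0 ≤ ρ) (hs : ∀ s : ℝ, 0 < s → h s < s) :
    Tendsto (fun t => itp h ρ t) atTop (𝓝 0) := by
  have hup : Tendsto (fun t : ℝ => h^[⌊t⌋₊] ρ) atTop (𝓝 0) :=
    (iter_tendsto hK hlt hρ hs).comp tendsto_nat_floor_atTop
  apply tendsto_of_tendsto_of_tendsto_of_le_of_le' (g := fun _ => (0:ℝ))
    tendsto_const_nhds hup
  · filter_upwards [eventually_ge_atTop (0:ℝ)] with t ht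
    exact itp_nonneg hK hlt hρ ht
  · filter_upwards [eventually_ge_atTop (0:ℝ)] with t ht
    exact itp_le hK hlt hρ ht

end Itp

section ItpCont
variable {h : ℝ → ℝ}

/-- the n-th linear piece of the interpolation. -/
noncomputable def itpPc (h : ℝ → ℝ) (n : ℕ) : ℝ × ℝ → ℝ :=
  fun p => (1 - (p.2 - (n:ℝ))) * h^[n] p.1 + (p.2 - (n:ℝ)) * h^[n+1] p.1

lemma itpPc_cont (hc : Continuous h) (n : ℕ) : Continuous (itpPc h n) := by
  unfold itpPc
  exact ((continuous_const.sub (continuous_snd.sub continuous_const)).mul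
      ((hc.iterate n).comp continuous_fst)).add
    ((continuous_snd.sub continuous_const).mul ((hc.iterate (n+1)).comp continuous_fst))

lemma itp_eq_pc {p : ℝ × ℝ} {n : ℕ} (h1 : (n:ℝ) ≤ p.2) (h2 : p.2 ≤ (n:ℝ) + 1) :
    itp h p.1 p.2 = itpPc h n p := by
  rcases eq_or_lt_of_le h2 with heq | hlt
  · have : p.2 = ((n+1 : ℕ):ℝ) := by push_cast; linarith
    unfold itp itpPc
    rw [this, Nat.floor_natCast]
    push_cast
    ring
  · have hfl : ⌊p.2⌋₊ = n := by
      rw [Nat.floor_eq_iff (le_trans (Nat.cast_nonneg n) h1)]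
      exact ⟨h1, by push_cast; linarith⟩
    unfold itp itpPc
    rw [hfl]

lemma itp_contOn (hc : Continuous h) :
    ContinuousOn (fun p : ℝ × ℝ => itp h p.1 p.2) (Set.univ ×ˢ Set.Ici 0) := by
  intro p hp
  have hp2 : (0:ℝ) ≤ p.2 := hp.2
  set n : ℕ := ⌊p.2⌋₊ with hn
  -- merged function
  set G : ℝ × ℝ → ℝ := fun q => if q.2 ≤ (n:ℝ) then itpPc h (n-1) q else itpPc h n q with hG
  have hGcont : Continuous G := by
    apply Continuous.if_le (itpPc_cont hc (n-1)) (itpPc_cont hc n) continuous_snd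
      continuous_const
    intro q hq
    rcases Nat.eq_zero_or_pos n with h0 | hpos
    · simp [h0]
    · have hcast : ((n-1 : ℕ):ℝ) = (n:ℝ) - 1 := by
        rw [Nat.cast_sub hpos]; simp
      have hn1 : (n-1) + 1 = n := Nat.succ_pred_eq_of_pos hpos
      unfold itpPc
      rw [hcast, hq, hn1]
      ring
  -- the claim that itp = G on the relevant set
  have hclaim : ∀ q : ℝ × ℝ, 0 ≤ q.2 → (n:ℝ) - 1 < q.2 → q.2 < (n:ℝ) + 1 →
      itp h q.1 q.2 = G q := by
    intro q hq0 hql hqu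
    by_cases hle : q.2 ≤ (n:ℝ)
    · have : G q = itpPc h (n-1) q := if_pos hle
      rw [this]
      rcases Nat.eq_zero_or_pos n with h0 | hpos
      · rw [h0] at hle ⊢
        apply itp_eq_pc (by simpa using hq0)
        simp only [Nat.zero_sub, Nat.cast_zero, zero_add]
        simp only [Nat.cast_zero] at hle
        linarith
      · have hcast : ((n-1 : ℕ):ℝ) = (n:ℝ) - 1 := by rw [Nat.cast_sub hpos]; simp
        apply itp_eq_pc (by rw [hcast]; linarith) (by rw [hcast]; linarith)
    · push_neg at hle
      have : G q = itpPc h n q := if_neg (not_le.mpr hle)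
      rw [this]
      exact itp_eq_pc hle.le hqu.le
  -- eventual equality within the set
  have hev : (fun q : ℝ × ℝ => itp h q.1 q.2) =ᶠ[𝓝[Set.univ ×ˢ Set.Ici 0] p] G := by
    have hopen : IsOpen {q : ℝ × ℝ | (n:ℝ) - 1 < q.2 ∧ q.2 < (n:ℝ) + 1} :=
      ((isOpen_lt continuous_const continuous_snd).inter
        (isOpen_lt continuous_snd continuous_const))
    have hpmem : p ∈ {q : ℝ × ℝ | (n:ℝ) - 1 < q.2 ∧ q.2 < (n:ℝ) + 1} := by
      constructor
      · have := Nat.floor_le hp2; rw [← hn] at this; linarith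
      · have := Nat.lt_floor_add_one p.2; rw [← hn] at this; exact_mod_cast this
    filter_upwards [eventually_nhdsWithin_of_eventually_nhds (hopen.eventually_mem hpmem),
      self_mem_nhdsWithin] with q hq2 hq3
    exact hclaim q hq3.2 hq2.1 hq2.2
  have hpeq : itp h p.1 p.2 = G p := hclaim p hp2
    (by have := Nat.floor_le hp2; rw [← hn] at this; linarith)
    (by have := Nat.lt_floor_add_one p.2; rw [← hn] at this; exact_mod_cast this)
  exact (hGcont.continuousAt.continuousWithinAt).congr_of_eventuallyEq hev hpeq

end ItpCont

section Rec
/-- weak triangle inequality for monotone nonneg functions -/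
lemma kw_split {κ : ℝ → ℝ} (hκ : Kw κ) {u v : ℝ} (hu : 0 ≤ u) (hv : 0 ≤ v) :
    κ (u + v) ≤ κ (2*u) + κ (2*v) := by
  have h1 : u + v ≤ 2 * max u v := by
    rcases le_total u v with h | h
    · rw [max_eq_right h]; linarith
    · rw [max_eq_left h]; linarith
  have h2 : κ (u + v) ≤ κ (2 * max u v) := hκ.2.1 h1
  have h3 : (2 : ℝ) * max u v = max (2*u) (2*v) := by
    rcases le_total u v with h | h
    · rw [max_eq_right h, max_eq_right (by linarith : 2*u ≤ 2*v)]
    · rw [max_eq_left h, max_eq_left (by linarith : 2*v ≤ 2*u)]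
  rw [h3] at h2
  have h4 : max (κ (2*u)) (κ (2*v)) ≤ κ (2*u) + κ (2*v) :=
    max_le (le_add_of_nonneg_right (hκ.nonneg (by linarith)))
      (le_add_of_nonneg_left (hκ.nonneg (by linarith)))
  calc κ (u+v) ≤ max (κ (2*u)) (κ (2*v)) := by rw [← hκ.2.1.map_max]; exact h2
    _ ≤ _ := h4

def thetaFn (κ : ℝ → ℝ) : ℕ → ℝ → ℝ
  | 0 => id
  | i+1 => fun s => κ (2 * thetaFn κ i s)

def phiFn (κ₁ κ₂ : ℝ → ℝ) : ℕ → ℝ → ℝ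
  | 0 => fun _ => 0
  | i+1 => fun s => κ₁ (2 * phiFn κ₁ κ₂ i s) + κ₂ s

def pitFn (κ₁ κ₂ : ℝ → ℝ) (c : ℝ) : ℕ → ℝ → ℝ
  | 0 => id
  | i+1 => fun s => κ₁ (pitFn κ₁ κ₂ c i s) + κ₂ c

lemma thetaFn_K0 {κ : ℝ → ℝ} (hκ : K0 κ) (i : ℕ) : K0 (thetaFn κ i) := by
  induction i with
  | zero => exact K0.id
  | succ i ih =>
    exact ⟨hκ.1.comp (continuous_const.mul ih.1),
      hκ.2.1.comp (fun a b hab => by simpa using mul_lt_mul_of_pos_left (ih.2.1 hab) two_pos),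
      by simp [thetaFn, ih.2.2, hκ.2.2]⟩

lemma phiFn_Kw {κ₁ κ₂ : ℝ → ℝ} (h₁ : K0 κ₁) (h₂ : K0 κ₂) (i : ℕ) :
    Kw (phiFn κ₁ κ₂ i) := by
  induction i with
  | zero => exact ⟨continuous_const, monotone_const, rfl⟩
  | succ i ih =>
    refine ⟨(h₁.1.comp (continuous_const.mul ih.1)).add h₂.1, ?_, ?_⟩
    · intro a b hab
      exact add_le_add (h₁.2.1.monotone (by linarith [ih.2.1 hab]))
        (h₂.2.1.monotone hab)
    · simp [phiFn, ih.2.2, h₁.2.2, h₂.2.2]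

lemma pit_le {κ₁ κ₂ : ℝ → ℝ} (h₁ : K0 κ₁) (h₂ : K0 κ₂) {a c : ℝ}
    (ha : 0 ≤ a) (hc : 0 ≤ c) (i : ℕ) :
    pitFn κ₁ κ₂ c i a ≤ thetaFn κ₁ i a + phiFn κ₁ κ₂ i c := by
  induction i with
  | zero => simp [pitFn, thetaFn, phiFn]
  | succ i ih =>
    have hθ : 0 ≤ thetaFn κ₁ i a := (thetaFn_K0 h₁ i).nonneg ha
    have hφ : 0 ≤ phiFn κ₁ κ₂ i c := (phiFn_Kw h₁ h₂ i).nonneg hc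
    calc pitFn κ₁ κ₂ c (i+1) a = κ₁ (pitFn κ₁ κ₂ c i a) + κ₂ c := rfl
      _ ≤ κ₁ (thetaFn κ₁ i a + phiFn κ₁ κ₂ i c) + κ₂ c :=
          add_le_add (h₁.2.1.monotone ih) le_rfl
      _ ≤ (κ₁ (2 * thetaFn κ₁ i a) + κ₁ (2 * phiFn κ₁ κ₂ i c)) + κ₂ c :=
          add_le_add (kw_split h₁.kw hθ hφ) le_rfl
      _ = thetaFn κ₁ (i+1) a + phiFn κ₁ κ₂ (i+1) c := by
          simp [thetaFn, phiFn]; ring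

end Rec

section Misc

lemma classK_nonneg {f : ℝ → ℝ} (h : ClassK f) {s : ℝ} (hs : 0 ≤ s) : 0 ≤ f s := by
  have := h.2.1.monotoneOn (Set.self_mem_Ici) hs hs
  rw [h.2.2] at this
  exact this

lemma inv_exists {f : ℝ → ℝ} (hf : ClassKInf f) :
    ∃ fi : ℝ → ℝ, K0 fi ∧ ∀ x y : ℝ, ext f x ≤ y ↔ x ≤ fi y := by
  have hK := ext_K0 hf.1
  let e := StrictMono.orderIsoOfSurjective (ext f) hK.2.1 (ext_surj hf)
  have hcoe : ∀ x, e x = ext f x := fun x => rfl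
  have hiff : ∀ x y : ℝ, ext f x ≤ y ↔ x ≤ e.symm y := by
    intro x y
    rw [← hcoe, ← OrderIso.le_symm_apply]
  refine ⟨fun y => e.symm y, ⟨e.symm.continuous, e.symm.strictMono, ?_⟩, hiff⟩
  have h0 : ext f 0 = 0 := hK.2.2
  have := (hiff 0 0).mp (le_of_eq h0)
  have h2 := (hiff (e.symm 0) 0).mpr (le_refl _)
  -- e.symm 0 ≤ 0 would need... derive equality:
  have h3 : e (e.symm 0) = 0 := e.apply_symm_apply 0
  rw [hcoe] at h3
  have := hK.2.1.injective (h3.trans h0.symm)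
  exact this

lemma itp_cont_left {h : ℝ → ℝ} (hc : Continuous h) (t : ℝ) :
    Continuous (fun ρ => itp h ρ t) := by
  unfold itp
  exact (continuous_const.mul (hc.iterate _)).add (continuous_const.mul (hc.iterate _))

lemma sol_shift {E U : Type*} (g : E → U → E) (ξ : E) (u : ℕ → U) (n : ℕ) :
    ∀ j, sol g ξ u (n + j) = sol g (sol g ξ u n) (fun i => u (n + i)) j := by
  intro j
  induction j with
  | zero => rfl
  | succ j ih => rw [← Nat.add_assoc]; show sol g ξ u ((n+j)+1) = _; rw [sol, ih]; rfl

lemma ext_lt_self {f : ℝ → ℝ} (hf : ClassK f) (hlt : ∀ s > (0:ℝ), f s < s) :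
    ∀ s : ℝ, 0 < s → ext f s < s := fun s hs => by rw [ext_eq hs.le]; exact hlt s hs

lemma ext_le_self {f : ℝ → ℝ} (hf : ClassK f) (hlt : ∀ s > (0:ℝ), f s < s) :
    ∀ s : ℝ, 0 ≤ s → ext f s ≤ s := by
  intro s hs
  rcases eq_or_lt_of_le hs with h | h
  · rw [← h, ext_eq le_rfl, hf.2.2]
  · exact (ext_lt_self hf hlt s h).le

end Misc

section MoreK0

lemma K0.comp2 {f g : ℝ → ℝ} (hf : K0 f) (hg : K0 g) : K0 (fun s => f (g s)) :=
  hf.comp hg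

lemma K0.two : K0 (fun s : ℝ => 2 * s) :=
  ⟨continuous_const.mul continuous_id, fun a b h => by dsimp; linarith, by ring⟩

lemma K0.add_kw {f g : ℝ → ℝ} (hf : K0 f) (hg : Kw g) : K0 (fun s => f s + g s) :=
  ⟨hf.1.add hg.1, fun a b h => add_lt_add_of_lt_of_le (hf.2.1 h) (hg.2.1 h.le),
    by simp [hf.2.2, hg.2.2]⟩

lemma K0.sum {F : ℕ → ℝ → ℝ} (hF : ∀ i, K0 (F i)) {M : ℕ} (hM : 0 < M) :
    K0 (fun s => ∑ i ∈ Finset.range M, F i s) := by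
  refine ⟨continuous_finset_sum _ (fun i _ => (hF i).1), ?_, ?_⟩
  · intro a b hab
    exact Finset.sum_lt_sum_of_nonempty (Finset.nonempty_range_iff.mpr hM.ne')
      (fun i _ => (hF i).2.1 hab)
  · show ∑ i ∈ Finset.range M, F i 0 = 0
    have : ∀ i ∈ Finset.range M, F i 0 = 0 := fun i _ => (hF i).2.2
    rw [Finset.sum_congr rfl this, Finset.sum_const, smul_zero]

end MoreK0
end PISS

open PISS in
/-- partial-ISS Lyapunov sufficiency: a finite-step Lyapunov
function for the x₁-part yields uniform input-to-x₁-state stability. -/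
theorem partial_ISS_sufficiency (n₁ n₂ m : ℕ)
    (g : EuclideanSpace ℝ (Fin n₁) × EuclideanSpace ℝ (Fin n₂) →
         EuclideanSpace ℝ (Fin m) →
         EuclideanSpace ℝ (Fin n₁) × EuclideanSpace ℝ (Fin n₂))
    (hg : Continuous fun p : (EuclideanSpace ℝ (Fin n₁) × EuclideanSpace ℝ (Fin n₂)) ×
      EuclideanSpace ℝ (Fin m) => g p.1 p.2)
    (hg0 : ∀ ξ₂, (g (0, ξ₂) 0).1 = 0)
    -- global K-boundedness with respect to ω(x₁,x₂) = |x₁|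
    (κ₁ κ₂ : ℝ → ℝ) (hκ₁ : ClassKInf κ₁) (hκ₂ : ClassKInf κ₂)
    (hkb : ∀ ξ μ, ‖(g ξ μ).1‖ ≤ κ₁ ‖ξ.1‖ + κ₂ ‖μ‖)
    (V : EuclideanSpace ℝ (Fin n₁) × EuclideanSpace ℝ (Fin n₂) → ℝ)
    (hVcont : Continuous V)
    (M : ℕ) (hM : 0 < M)
    (αl αu α γ : ℝ → ℝ) (hαl : ClassKInf αl) (hαu : ClassKInf αu)
    (hγ : ClassK γ) (hα : ClassKInf α) (hαlt : ∀ s > (0:ℝ), α s < s)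
    (hsand : ∀ ξ : EuclideanSpace ℝ (Fin n₁) × EuclideanSpace ℝ (Fin n₂),
      αl ‖ξ.1‖ ≤ V ξ ∧ V ξ ≤ αu ‖ξ.1‖)
    (hdecay : ∀ ξ u, BddInput u →
      V (sol g ξ u M) ≤ max (α (V ξ)) (γ (supNorm u))) :
    ∃ β γ', ClassKL β ∧ ClassK γ' ∧
      ∀ ξ u, BddInput u → ∀ k : ℕ,
        ‖(sol g ξ u k).1‖ ≤ max (β ‖ξ.1‖ (k : ℝ)) (γ' (supNorm u)) := by
  classical
  obtain ⟨αinv, hαinvK, hαinv⟩ := inv_exists hαl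
  have hκ1K : K0 (ext κ₁) := ext_K0 hκ₁.1
  have hκ2K : K0 (ext κ₂) := ext_K0 hκ₂.1
  have hαK : K0 (ext α) := ext_K0 hα.1
  have hαuK : K0 (ext αu) := ext_K0 hαu.1
  have hγK : K0 (ext γ) := ext_K0 hγ
  have hαle : ∀ s : ℝ, 0 ≤ s → ext α s ≤ s := ext_le_self hα.1 hαlt
  have hαltx : ∀ s : ℝ, 0 < s → ext α s < s := ext_lt_self hα.1 hαlt
  have hMR : (0:ℝ) < (M:ℝ) := by exact_mod_cast hM
  set θ : ℕ → ℝ → ℝ := thetaFn (ext κ₁) with hθdef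
  set φ : ℕ → ℝ → ℝ := phiFn (ext κ₁) (ext κ₂) with hφdef
  have hθK : ∀ i, K0 (θ i) := fun i => thetaFn_K0 hκ1K i
  have hφK : ∀ i, Kw (φ i) := fun i => phiFn_Kw hκ1K hκ2K i
  set Θ : ℝ → ℝ := fun s => ∑ i ∈ Finset.range M, θ i (2*s) with hΘdef
  set Φ : ℝ → ℝ := fun c => ∑ i ∈ Finset.range M,
    (θ i (2 * αinv (ext γ c)) + φ i c) with hΦdef
  have hΘK : K0 Θ := K0.sum (fun i => (hθK i).comp2 K0.two) hM
  have hΦK : K0 Φ := K0.sum (fun i =>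
    (((hθK i).comp2 (K0.two.comp2 (hαinvK.comp2 hγK))).add_kw (hφK i))) hM
  have hVpos : ∀ p, 0 ≤ V p := fun p =>
    le_trans (classK_nonneg hαl.1 (norm_nonneg _)) (hsand p).1
  refine ⟨fun r s => 2 * Θ (αinv (itp (ext α) (ext αu r) (max (s / M - 1) 0))),
    fun c => 2 * Φ c, ⟨?_, ?_, ?_⟩, ?_, ?_⟩
  · -- joint continuity
    have hin : Continuous (fun p : ℝ × ℝ => ((ext αu p.1, max (p.2 / M - 1) 0) : ℝ × ℝ)) :=
      (hαuK.1.comp continuous_fst).prodMk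
        (((continuous_snd.div_const _).sub continuous_const).max continuous_const)
    have hmaps : Set.MapsTo (fun p : ℝ × ℝ => ((ext αu p.1, max (p.2 / M - 1) 0) : ℝ × ℝ))
        (Set.Ici 0 ×ˢ Set.Ici 0) (Set.univ ×ˢ Set.Ici 0) :=
      fun p _ => ⟨Set.mem_univ _, Set.mem_Ici.mpr (le_max_right _ _)⟩
    have hitp := (itp_contOn hαK.1).comp hin.continuousOn hmaps
    exact (continuous_const.mul (hΘK.1.comp hαinvK.1)).comp_continuousOn hitp
  · -- ClassK in r
    intro s hs
    have ht0 : (0:ℝ) ≤ max (s / M - 1) 0 := le_max_right _ _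
    apply K0.classK
    refine ⟨?_, ?_, ?_⟩
    · exact continuous_const.mul (hΘK.1.comp (hαinvK.1.comp
        ((itp_cont_left hαK.1 _).comp hαuK.1)))
    · intro a b hab
      have := (itp_strictMono hαK ht0) (hαuK.2.1 hab)
      have := hΘK.2.1 (hαinvK.2.1 this)
      dsimp only
      linarith
    · show 2 * Θ (αinv (itp (ext α) (ext αu 0) (max (s / M - 1) 0))) = 0
      rw [hαuK.2.2, itp_zero hαK, hαinvK.2.2, hΘK.2.2, mul_zero]
  · -- antitone + tendsto in s
    intro r hr
    have hρ0 : 0 ≤ ext αu r := hαuK.nonneg hr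
    constructor
    · intro s₁ hs₁ s₂ hs₂ h12
      have ht1 : (0:ℝ) ≤ max (s₁ / M - 1) 0 := le_max_right _ _
      have htm : max (s₁ / M - 1) 0 ≤ max (s₂ / M - 1) 0 :=
        max_le_max (by gcongr) le_rfl
      have := itp_anti hαK hαle hρ0 ht1 htm
      have := hΘK.2.1.monotone (hαinvK.2.1.monotone this)
      dsimp only
      linarith
    · have htend : Tendsto (fun s : ℝ => max (s / M - 1) 0) atTop atTop := by
        apply tendsto_atTop_mono (fun s => le_max_left _ _)
        exact tendsto_atTop_add_const_right _ _ (tendsto_id.atTop_div_const hMR)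
      have hitt := (itp_tendsto hαK hαle hρ0 hαltx).comp htend
      have hout : Tendsto (fun v => 2 * Θ (αinv v)) (𝓝 0) (𝓝 0) := by
        have : Tendsto (fun v => 2 * Θ (αinv v)) (𝓝 0) (𝓝 (2 * Θ (αinv 0))) :=
          (continuous_const.mul (hΘK.1.comp hαinvK.1)).tendsto 0
        rwa [hαinvK.2.2, hΘK.2.2, mul_zero] at this
      exact hout.comp hitt
  · -- ClassK γ'
    exact K0.classK ⟨continuous_const.mul hΦK.1,
      fun a b hab => by dsimp; linarith [hΦK.2.1 hab],
      by show 2 * Φ 0 = 0; rw [hΦK.2.2, mul_zero]⟩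
  · -- main estimate
    intro ξ u hu k
    set c := supNorm u with hcdef
    have hbdd : BddAbove (Set.range fun k => ‖u k‖) := by
      obtain ⟨C, hC⟩ := hu
      exact ⟨C, by rintro x ⟨k, rfl⟩; exact hC k⟩
    have hukc : ∀ k, ‖u k‖ ≤ c := fun k => le_ciSup hbdd k
    have hc0 : (0:ℝ) ≤ c := le_trans (norm_nonneg _) (hukc 0)
    -- V decay along multiples of M
    have key1 : ∀ j, V (sol g ξ u (M*j)) ≤ max ((ext α)^[j] (V ξ)) (ext γ c) := by
      intro j
      induction j with
      | zero => simpa [sol] using le_max_left (V ξ) (ext γ c)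
      | succ j ih =>
        set u' : ℕ → EuclideanSpace ℝ (Fin m) := fun i => u (M*j + i) with hu'def
        have hu' : BddInput u' := by
          obtain ⟨C, hC⟩ := hu; exact ⟨C, fun k => hC _⟩
        have hbdd' : BddAbove (Set.range fun k => ‖u' k‖) := by
          obtain ⟨C, hC⟩ := hu'
          exact ⟨C, by rintro x ⟨k, rfl⟩; exact hC k⟩
        have hsn : supNorm u' ≤ c := ciSup_le (fun i => hukc _)
        have hsn0 : (0:ℝ) ≤ supNorm u' := le_trans (norm_nonneg _) (le_ciSup hbdd' 0)
        have hst : sol g ξ u (M*(j+1)) = sol g (sol g ξ u (M*j)) u' M := by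
          rw [Nat.mul_succ]; exact sol_shift g ξ u (M*j) M
        have hd := hdecay (sol g ξ u (M*j)) u' hu'
        rw [← hst] at hd
        have hγ' : γ (supNorm u') ≤ ext γ c := by
          rw [← ext_eq (f := γ) hsn0]; exact hγK.2.1.monotone hsn
        have hα' : α (V (sol g ξ u (M*j))) = ext α (V (sol g ξ u (M*j))) :=
          (ext_eq (hVpos _)).symm
        calc V (sol g ξ u (M*(j+1)))
            ≤ max (ext α (V (sol g ξ u (M*j)))) (ext γ c) :=
              le_trans hd (max_le_max hα'.le hγ')
          _ ≤ max (ext α (max ((ext α)^[j] (V ξ)) (ext γ c))) (ext γ c) :=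
              max_le_max (hαK.2.1.monotone ih) le_rfl
          _ ≤ max ((ext α)^[j+1] (V ξ)) (ext γ c) := by
              rw [hαK.2.1.monotone.map_max]
              have h1 : (ext α) ((ext α)^[j] (V ξ)) = (ext α)^[j+1] (V ξ) :=
                (Function.iterate_succ_apply' (ext α) j (V ξ)).symm
              have h2 : ext α (ext γ c) ≤ ext γ c := hαle _ (hγK.nonneg hc0)
              rw [h1]
              exact max_le (max_le (le_max_left _ _)
                (le_trans h2 (le_max_right _ _))) (le_max_right _ _)
    -- growth between multiples
    have key2 : ∀ n i, ‖(sol g ξ u (n+i)).1‖ ≤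
        pitFn (ext κ₁) (ext κ₂) c i ‖(sol g ξ u n).1‖ := by
      intro n i
      induction i with
      | zero => simp [pitFn]
      | succ i ih =>
        have hrw : sol g ξ u (n+(i+1)) = g (sol g ξ u (n+i)) (u (n+i)) := by
          rw [← Nat.add_assoc]; rfl
        calc ‖(sol g ξ u (n+(i+1))).1‖ = ‖(g (sol g ξ u (n+i)) (u (n+i))).1‖ := by rw [hrw]
          _ ≤ κ₁ ‖(sol g ξ u (n+i)).1‖ + κ₂ ‖u (n+i)‖ := hkb _ _
          _ = ext κ₁ ‖(sol g ξ u (n+i)).1‖ + ext κ₂ ‖u (n+i)‖ := by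
              rw [ext_eq (norm_nonneg _), ext_eq (norm_nonneg _)]
          _ ≤ ext κ₁ (pitFn (ext κ₁) (ext κ₂) c i ‖(sol g ξ u n).1‖) + ext κ₂ c :=
              add_le_add (hκ1K.2.1.monotone ih) (hκ2K.2.1.monotone (hukc _))
          _ = pitFn (ext κ₁) (ext κ₂) c (i+1) ‖(sol g ξ u n).1‖ := rfl
    -- assemble
    set r := ‖ξ.1‖ with hrdef
    set j := k / M with hjdef
    set i := k % M with hidef
    have hiM : i < M := Nat.mod_lt _ hM
    have hkeq : M*j + i = k := Nat.div_add_mod k M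
    set A : ℝ := (ext α)^[j] (ext αu r) with hAdef
    set B : ℝ := ext γ c with hBdef
    have hr0 : (0:ℝ) ≤ r := norm_nonneg _
    have hρ0 : 0 ≤ ext αu r := hαuK.nonneg hr0
    have hA0 : 0 ≤ A := iter_nonneg hαK hρ0 j
    have hB0 : 0 ≤ B := hγK.nonneg hc0
    have hVb : V (sol g ξ u (M*j)) ≤ max A B := by
      refine le_trans (key1 j) (max_le_max ?_ le_rfl)
      apply (hαK.2.1.iterate j).monotone
      rw [ext_eq (f := αu) hr0]
      exact (hsand ξ).2
    have hxn : ‖(sol g ξ u (M*j)).1‖ ≤ αinv (max A B) := by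
      apply (hαinv _ _).mp
      rw [ext_eq (norm_nonneg _)]
      exact le_trans (hsand _).1 hVb
    have hsplit : αinv (max A B) ≤ αinv A + αinv B := by
      rw [hαinvK.2.1.monotone.map_max]
      exact max_le (le_add_of_nonneg_right (hαinvK.nonneg hB0))
        (le_add_of_nonneg_left (hαinvK.nonneg hA0))
    set t : ℝ := max ((k:ℝ) / M - 1) 0 with htdef
    have ht0 : (0:ℝ) ≤ t := le_max_right _ _
    have htj : t ≤ (j:ℝ) := by
      apply max_le _ (Nat.cast_nonneg j)
      have hkj : (k:ℝ) < M*((j:ℝ)+1) := by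
        have : k < M*(j+1) := by
          rw [Nat.mul_succ, ← hkeq]; exact Nat.add_lt_add_left hiM _
        exact_mod_cast this
      rw [sub_le_iff_le_add, div_le_iff₀ hMR]
      linarith
    set A' : ℝ := itp (ext α) (ext αu r) t with hA'def
    have hAA' : A ≤ A' := iter_le_itp hαK hαle hρ0 ht0 htj
    have hxk : ‖(sol g ξ u k).1‖ ≤ θ i ‖(sol g ξ u (M*j)).1‖ + φ i c := by
      have := key2 (M*j) i
      rw [hkeq] at this
      exact le_trans this (pit_le hκ1K hκ2K (norm_nonneg _) hc0 i)
    have hθbound : θ i ‖(sol g ξ u (M*j)).1‖ ≤ θ i (2*(αinv A')) + θ i (2*(αinv B)) := by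
      have h1 : ‖(sol g ξ u (M*j)).1‖ ≤ αinv A' + αinv B :=
        le_trans hxn (le_trans hsplit (add_le_add (hαinvK.2.1.monotone hAA') le_rfl))
      have h2 := (hθK i).2.1.monotone h1
      exact le_trans h2 (kw_split (hθK i).kw
        (hαinvK.nonneg (le_trans hA0 hAA')) (hαinvK.nonneg hB0))
    have hmem : i ∈ Finset.range M := Finset.mem_range.mpr hiM
    have hΘbound : θ i (2*(αinv A')) ≤ Θ (αinv A') :=
      Finset.single_le_sum (f := fun i => θ i (2*(αinv A')))
        (fun l _ => (hθK l).nonneg (mul_nonneg (by norm_num) (hαinvK.nonneg (le_trans hA0 hAA')))) hmem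
    have hΦbound : θ i (2*(αinv B)) + φ i c ≤ Φ c :=
      Finset.single_le_sum (f := fun l => θ l (2 * αinv (ext γ c)) + φ l c)
        (fun l _ => add_nonneg ((hθK l).nonneg (mul_nonneg (by norm_num) (hαinvK.nonneg hB0)))
          ((hφK l).nonneg hc0)) hmem
    have hsum : ‖(sol g ξ u k).1‖ ≤ Θ (αinv A') + Φ c := by
      have := le_trans hxk (add_le_add hθbound le_rfl)
      calc ‖(sol g ξ u k).1‖ ≤ θ i (2*(αinv A')) + θ i (2*(αinv B)) + φ i c := by linarith
        _ = θ i (2*(αinv A')) + (θ i (2*(αinv B)) + φ i c) := by ring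
        _ ≤ Θ (αinv A') + Φ c := add_le_add hΘbound hΦbound
    have hX0 : 0 ≤ Θ (αinv A') := hΘK.nonneg (hαinvK.nonneg (le_trans hA0 hAA'))
    have hY0 : 0 ≤ Φ c := hΦK.nonneg hc0
    have hfin : Θ (αinv A') + Φ c ≤ max (2 * Θ (αinv A')) (2 * Φ c) := by
      rcases le_total (Θ (αinv A')) (Φ c) with h | h
      · exact le_trans (by linarith) (le_max_right _ _)
      · exact le_trans (by linarith) (le_max_left _ _)
    exact le_trans hsum hfin
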